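/- Under the conditions ε_0+ε_1 ≤ c_1 ≤ π/2−ε_0−ε_1, π/2+ε_2+ε_3 ≤ c_2 ≤ π−ε_2−ε_3, ε_1+ε_2 ≤ c_2−c_1 ≤ π/2−ε_1−ε_2, the 2π-periodic bump filters â = χ_{[−c_1,c_1];ε_1,ε_1}, b̂₁ᵖ = χ_{[c_1,c_2];ε_1,ε_2}, b̂₂ᵖ = χ_{[c_2,π];ε_2,ε_3} (defined on [−π,π)) satisfy the shift-non-overlapping properties: â(ξ)â(ξ+π) = 0 for all ξ ∈ ℝ, and û(ξ)û(ξ + γπ/2) = 0 for all ξ ∈ ℝ, γ ∈ {1,2,3}, and u ∈ {b₁ᵖ, b₂ᵖ, b₁ⁿ, b₂ⁿ}, where b̂ₗⁿ(ξ) := conj(b̂ₗᵖ(−ξ)). -/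
import Mathlib


/-- The bump function χ_{[c_L,c_R];ε_L,ε_R} of the paper. -/
noncomputable def bump (cL cR εL εR ξ : ℝ) : ℝ :=
  if ξ ≤ cL - εL ∨ cR + εR ≤ ξ then 0
  else if ξ < cL + εL then Real.cos (Real.pi * (cL + εL - ξ) / (4 * εL))
  else if ξ ≤ cR - εR then 1
  else Real.cos (Real.pi * (ξ - cR + εR) / (4 * εR))

/-- 2π-periodic extension from the fundamental interval [-π, π). -/
noncomputable def per2pi (f : ℝ → ℝ) (ξ : ℝ) : ℝ :=
  f (ξ - 2 * Real.pi * ⌊(ξ + Real.pi) / (2 * Real.pi)⌋)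

lemma bump_support {cL cR εL εR x : ℝ} (h : bump cL cR εL εR x ≠ 0) :
    cL - εL < x ∧ x < cR + εR := by
  by_contra hc
  push_neg at hc
  apply h
  unfold bump
  rw [if_pos]
  by_cases h1 : cL - εL < x
  · exact Or.inr (hc h1)
  · exact Or.inl (le_of_not_gt h1)

lemma rep_mem (ξ : ℝ) :
    -Real.pi ≤ ξ - 2 * Real.pi * ⌊(ξ + Real.pi) / (2 * Real.pi)⌋ ∧
    ξ - 2 * Real.pi * ⌊(ξ + Real.pi) / (2 * Real.pi)⌋ < Real.pi := by
  have hπ := Real.pi_pos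
  have h2π : (0:ℝ) < 2 * Real.pi := by linarith
  have h1 := Int.floor_le ((ξ + Real.pi) / (2 * Real.pi))
  have h2 := Int.lt_floor_add_one ((ξ + Real.pi) / (2 * Real.pi))
  have h1' : (⌊(ξ + Real.pi) / (2 * Real.pi)⌋ : ℝ) * (2 * Real.pi) ≤ ξ + Real.pi :=
    (le_div_iff₀ h2π).mp h1
  have h2' : ξ + Real.pi < ((⌊(ξ + Real.pi) / (2 * Real.pi)⌋ : ℝ) + 1) * (2 * Real.pi) :=
    (div_lt_iff₀ h2π).mp h2
  constructor <;> nlinarith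

lemma shift_zero (f : ℝ → ℝ) (a b s : ℝ)
    (hsupp : ∀ x, -Real.pi ≤ x → x < Real.pi → f x ≠ 0 → a < x ∧ x < b)
    (hW : b - a ≤ |s|) (hS : |s| + (b - a) ≤ 2 * Real.pi) (ξ : ℝ) :
    per2pi f ξ * per2pi f (ξ + s) = 0 := by
  by_contra h
  have h1 : per2pi f ξ ≠ 0 := fun h0 => h (by rw [h0]; ring)
  have h2 : per2pi f (ξ + s) ≠ 0 := fun h0 => h (by rw [h0]; ring)
  set k1 : ℤ := ⌊(ξ + Real.pi) / (2 * Real.pi)⌋ with hk1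
  set k2 : ℤ := ⌊(ξ + s + Real.pi) / (2 * Real.pi)⌋ with hk2
  set x1 : ℝ := ξ - 2 * Real.pi * k1 with hx1
  set x2 : ℝ := ξ + s - 2 * Real.pi * k2 with hx2
  have hm1 := rep_mem ξ
  have hm2 := rep_mem (ξ + s)
  rw [← hk1, ← hx1] at hm1
  rw [← hk2, ← hx2] at hm2
  have hf1 : f x1 ≠ 0 := h1
  have hf2 : f x2 ≠ 0 := h2
  obtain ⟨ha1, hb1⟩ := hsupp x1 hm1.1 hm1.2 hf1
  obtain ⟨ha2, hb2⟩ := hsupp x2 hm2.1 hm2.2 hf2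
  have key : x2 - x1 - s = 2 * Real.pi * ((k1 : ℝ) - (k2 : ℝ)) := by
    rw [hx1, hx2]; ring
  have hπ := Real.pi_pos
  have hd : |x2 - x1| < b - a := abs_lt.mpr ⟨by linarith, by linarith⟩
  have hdle : |x2 - x1 - s| ≤ |x2 - x1| + |s| := by
    calc |x2 - x1 - s| = |(x2 - x1) + (-s)| := by ring_nf
    _ ≤ |x2 - x1| + |(-s)| := abs_add_le _ _
    _ = |x2 - x1| + |s| := by rw [abs_neg]
  have hmk : k1 = k2 := by
    by_contra hne
    have h1abs : (1:ℝ) ≤ |((k1 - k2 : ℤ) : ℝ)| := by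
      rw [← Int.cast_abs]
      exact_mod_cast Int.one_le_abs (sub_ne_zero.mpr hne)
    have hcast : |((k1 - k2 : ℤ) : ℝ)| = |(k1:ℝ) - (k2:ℝ)| := by push_cast; ring_nf
    rw [hcast] at h1abs
    have hge : 2 * Real.pi ≤ |2 * Real.pi * ((k1:ℝ) - (k2:ℝ))| := by
      rw [abs_mul, abs_of_pos (by linarith : (0:ℝ) < 2 * Real.pi)]
      nlinarith
    rw [← key] at hge
    linarith
  rw [hmk] at key
  simp at key
  have hsx : x2 - x1 = s := by linarith
  rw [hsx] at hd
  linarith [le_abs_self s, neg_abs_le s]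

theorem ctf6_shift_nonoverlapping
    (c0 c1 c2 ε0 ε1 ε2 ε3 : ℝ)
    (hc0 : 0 < c0) (hc01 : c0 < c1) (hc12 : c1 < c2) (hc2 : c2 < Real.pi)
    (hε0 : 0 < ε0) (hε1 : 0 < ε1) (hε2 : 0 < ε2) (hε3 : 0 < ε3)
    (h1 : ε0 + ε1 ≤ c1) (h1' : c1 ≤ Real.pi / 2 - ε0 - ε1)
    (h2 : Real.pi / 2 + ε2 + ε3 ≤ c2) (h2' : c2 ≤ Real.pi - ε2 - ε3)
    (h3 : ε1 + ε2 ≤ c2 - c1) (h3' : c2 - c1 ≤ Real.pi / 2 - ε1 - ε2) :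
    (∀ ξ : ℝ,
      per2pi (bump (-c1) c1 ε1 ε1) ξ * per2pi (bump (-c1) c1 ε1 ε1) (ξ + Real.pi) = 0) ∧
    (∀ ξ : ℝ, ∀ γ ∈ ({1, 2, 3} : Finset ℕ),
      per2pi (bump c1 c2 ε1 ε2) ξ *
        per2pi (bump c1 c2 ε1 ε2) (ξ + γ * Real.pi / 2) = 0 ∧
      per2pi (bump c2 Real.pi ε2 ε3) ξ *
        per2pi (bump c2 Real.pi ε2 ε3) (ξ + γ * Real.pi / 2) = 0 ∧
      per2pi (bump c1 c2 ε1 ε2) (-ξ) *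
        per2pi (bump c1 c2 ε1 ε2) (-(ξ + γ * Real.pi / 2)) = 0 ∧
      per2pi (bump c2 Real.pi ε2 ε3) (-ξ) *
        per2pi (bump c2 Real.pi ε2 ε3) (-(ξ + γ * Real.pi / 2)) = 0) := by
  have hπ := Real.pi_pos
  have habs : ∀ t : ℝ, 0 ≤ t → |t| = t ∧ |(-t)| = t := fun t ht => ⟨abs_of_nonneg ht, by rw [abs_neg]; exact abs_of_nonneg ht⟩
  have key1 : ∀ t : ℝ, Real.pi / 2 ≤ t → t ≤ 3 * Real.pi / 2 → ∀ ξ : ℝ,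
      per2pi (bump c1 c2 ε1 ε2) ξ * per2pi (bump c1 c2 ε1 ε2) (ξ + t) = 0 ∧
      per2pi (bump c1 c2 ε1 ε2) ξ * per2pi (bump c1 c2 ε1 ε2) (ξ + -t) = 0 := by
    intro t ht1 ht2 ξ
    obtain ⟨e1, e2⟩ := habs t (by linarith)
    constructor <;>
    · apply shift_zero _ (c1 - ε1) (c2 + ε2)
      · intro x _ _ hx
        exact bump_support hx
      · first | rw [e1] | rw [e2]
        linarith
      · first | rw [e1] | rw [e2]
        linarith
  have key2 : ∀ t : ℝ, Real.pi / 2 ≤ t → t ≤ 3 * Real.pi / 2 → ∀ ξ : ℝ,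
      per2pi (bump c2 Real.pi ε2 ε3) ξ * per2pi (bump c2 Real.pi ε2 ε3) (ξ + t) = 0 ∧
      per2pi (bump c2 Real.pi ε2 ε3) ξ * per2pi (bump c2 Real.pi ε2 ε3) (ξ + -t) = 0 := by
    intro t ht1 ht2 ξ
    obtain ⟨e1, e2⟩ := habs t (by linarith)
    constructor <;>
    · apply shift_zero _ (c2 - ε2) Real.pi
      · intro x _ hx2 hx
        exact ⟨(bump_support hx).1, hx2⟩
      · first | rw [e1] | rw [e2]
        linarith
      · first | rw [e1] | rw [e2]
        linarith
  constructor
  · intro ξ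
    apply shift_zero _ (-c1 - ε1) (c1 + ε1) Real.pi
    · intro x _ _ hx
      have := bump_support hx
      exact ⟨by linarith [this.1], this.2⟩
    · rw [abs_of_pos hπ]; linarith
    · rw [abs_of_pos hπ]; linarith
  · intro ξ γ hγ
    fin_cases hγ <;>
    · push_cast
      refine ⟨(key1 _ (by linarith) (by linarith) ξ).1, (key2 _ (by linarith) (by linarith) ξ).1, ?_, ?_⟩
      · rw [show ∀ c : ℝ, -(ξ + c) = -ξ + -c from fun c => by ring]
        exact (key1 _ (by linarith) (by linarith) (-ξ)).2
      · rw [show ∀ c : ℝ, -(ξ + c) = -ξ + -c from fun c => by ring]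
        exact (key2 _ (by linarith) (by linarith) (-ξ)).2
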